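/- Let G be a graph and V₁, …, V_ℓ subsets of V(G) with union V(G). Then for each k ≥ 0, fμᵏ(G) ≤ Σᵢ fμᵏ(hull(Vᵢ)), where hull(Vᵢ) is the convex hull of Vᵢ in G. -/

import Mathlib

open SimpleGraph

variable {V : Type*}

/-- `X` is a `k`-fault-tolerant mutual-visibility set of `G`: for any two distinct
non-adjacent vertices `u v ∈ X` there are `k+1` internally disjoint shortest
`u,v`-paths whose only vertices in `X` are `u` and `v`. -/
def IsFtmvSet (G : SimpleGraph V) (k : ℕ) (X : Set V) : Prop :=
  ∀ u ∈ X, ∀ v ∈ X, u ≠ v → ¬ G.Adj u v →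
    ∃ P : Fin (k + 1) → G.Path u v,
      (∀ i, (P i).1.length = G.dist u v) ∧
      (∀ i, ∀ w ∈ (P i).1.support, w ∈ X → w = u ∨ w = v) ∧
      (∀ i j, i ≠ j → ∀ w, w ∈ (P i).1.support → w ∈ (P j).1.support → w = u ∨ w = v)

/-- The `k`-fault-tolerant mutual-visibility number: maximum cardinality of a `k`-ftmv set. -/
noncomputable def ftmvNum (G : SimpleGraph V) (k : ℕ) : ℕ :=
  sSup {n | ∃ X : Set V, IsFtmvSet G k X ∧ X.ncard = n}

/-- The clique number of `G`. -/
noncomputable def cliqueNum' (G : SimpleGraph V) : ℕ :=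
  sSup {n | ∃ s : Finset V, G.IsNClique n s}

/-- A set `S` is convex in `G` if every shortest path between vertices of `S`
lies entirely in `S`. -/
def IsConvexSet (G : SimpleGraph V) (S : Set V) : Prop :=
  ∀ u ∈ S, ∀ v ∈ S, ∀ p : G.Walk u v, p.IsPath → p.length = G.dist u v →
    ∀ w ∈ p.support, w ∈ S

/-- The convex hull of `S` in `G`: intersection of all convex sets containing `S`. -/
def convexHullSet (G : SimpleGraph V) (S : Set V) : Set V :=
  ⋂₀ {T : Set V | S ⊆ T ∧ IsConvexSet G T}

lemma subset_convexHullSet (G : SimpleGraph V) (S : Set V) : S ⊆ convexHullSet G S := by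
  intro x hx T hT; exact hT.1 hx

lemma isConvex_convexHullSet (G : SimpleGraph V) (S : Set V) :
    IsConvexSet G (convexHullSet G S) := by
  intro u hu v hv p hp hlen w hw T hT
  exact hT.2 u (hu T hT) v (hv T hT) p hp hlen w hw

/-- Transfer a walk whose support lies in `S` to the induced graph on `S`. -/
def walkToInduce (G : SimpleGraph V) (S : Set V) :
    ∀ {u v : V} (p : G.Walk u v), (∀ w ∈ p.support, w ∈ S) →
    ∀ (hu : u ∈ S) (hv : v ∈ S), (G.induce S).Walk ⟨u, hu⟩ ⟨v, hv⟩
  | _, _, SimpleGraph.Walk.nil, _, _, _ => SimpleGraph.Walk.nil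
  | _, _, SimpleGraph.Walk.cons hadj q, h, hu, hv =>
      SimpleGraph.Walk.cons (by simpa using hadj)
        (walkToInduce G S q (fun w hw => h w (by simp [hw]))
          (h _ (by simp)) hv)

lemma walkToInduce_support (G : SimpleGraph V) (S : Set V) :
    ∀ {u v : V} (p : G.Walk u v) (h : ∀ w ∈ p.support, w ∈ S) (hu : u ∈ S) (hv : v ∈ S),
    (walkToInduce G S p h hu hv).support.map Subtype.val = p.support
  | _, _, SimpleGraph.Walk.nil, _, _, _ => by simp [walkToInduce]
  | _, _, SimpleGraph.Walk.cons hadj q, h, hu, hv => by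
      simp [walkToInduce, walkToInduce_support G S q]

lemma walkToInduce_length (G : SimpleGraph V) (S : Set V) :
    ∀ {u v : V} (p : G.Walk u v) (h : ∀ w ∈ p.support, w ∈ S) (hu : u ∈ S) (hv : v ∈ S),
    (walkToInduce G S p h hu hv).length = p.length
  | _, _, SimpleGraph.Walk.nil, _, _, _ => by simp [walkToInduce]
  | _, _, SimpleGraph.Walk.cons hadj q, h, hu, hv => by
      simp [walkToInduce, walkToInduce_length G S q]

lemma walkToInduce_isPath (G : SimpleGraph V) (S : Set V)
    {u v : V} (p : G.Walk u v) (h : ∀ w ∈ p.support, w ∈ S) (hu : u ∈ S) (hv : v ∈ S)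
    (hp : p.IsPath) : (walkToInduce G S p h hu hv).IsPath := by
  rw [SimpleGraph.Walk.isPath_def]
  have := hp.support_nodup
  rw [← walkToInduce_support G S p h hu hv] at this
  exact this.of_map _


lemma induce_dist_eq (G : SimpleGraph V) (T : Set V) {u v : V} (hu : u ∈ T) (hv : v ∈ T)
    {p : G.Walk u v} (hsupp : ∀ w ∈ p.support, w ∈ T) (hlen : p.length = G.dist u v) :
    (G.induce T).dist ⟨u, hu⟩ ⟨v, hv⟩ = G.dist u v := by
  set Q := walkToInduce G T p hsupp hu hv with hQ
  have h1 : (G.induce T).dist ⟨u, hu⟩ ⟨v, hv⟩ ≤ G.dist u v := by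
    calc (G.induce T).dist ⟨u, hu⟩ ⟨v, hv⟩ ≤ Q.length := SimpleGraph.dist_le Q
    _ = p.length := walkToInduce_length G T p hsupp hu hv
    _ = G.dist u v := hlen
  have h2 : G.dist u v ≤ (G.induce T).dist ⟨u, hu⟩ ⟨v, hv⟩ := by
    obtain ⟨q, hq⟩ := (Q.reachable).exists_walk_length_eq_dist
    calc G.dist u v ≤ (q.map (SimpleGraph.Embedding.induce T).toHom).length :=
        SimpleGraph.dist_le _
    _ = q.length := SimpleGraph.Walk.length_map _ _
    _ = _ := hq
  omega

lemma isFtmv_induce (G : SimpleGraph V) (T : Set V) (hT : IsConvexSet G T)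
    (k : ℕ) (X : Set V) (hX : IsFtmvSet G k X) :
    IsFtmvSet (G.induce T) k {x : T | (x : V) ∈ X} := by
  rintro ⟨u, hu⟩ hu' ⟨v, hv⟩ hv' hne hadj
  have hne' : u ≠ v := fun h => hne (by simpa using h)
  have hadj' : ¬ G.Adj u v := fun h => hadj (by simpa using h)
  obtain ⟨P, hPlen, hPX, hPdisj⟩ := hX u hu' v hv' hne' hadj'
  have hsupp : ∀ i, ∀ w ∈ (P i).1.support, w ∈ T := fun i =>
    hT u hu v hv (P i).1 (P i).2 (hPlen i)
  refine ⟨fun i => ⟨walkToInduce G T (P i).1 (hsupp i) hu hv,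
    walkToInduce_isPath G T (P i).1 (hsupp i) hu hv (P i).2⟩, ?_, ?_, ?_⟩
  · intro i
    rw [walkToInduce_length, hPlen i]
    exact (induce_dist_eq G T hu hv (hsupp i) (hPlen i)).symm
  · rintro i ⟨w, hwT⟩ hw hwX
    have : w ∈ (P i).1.support := by
      rw [← walkToInduce_support G T (P i).1 (hsupp i) hu hv]
      exact List.mem_map_of_mem hw
    rcases hPX i w this hwX with h | h
    · exact Or.inl (Subtype.ext h)
    · exact Or.inr (Subtype.ext h)
  · rintro i j hij ⟨w, hwT⟩ hwi hwj
    have hi : w ∈ (P i).1.support := by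
      rw [← walkToInduce_support G T (P i).1 (hsupp i) hu hv]
      exact List.mem_map_of_mem hwi
    have hj : w ∈ (P j).1.support := by
      rw [← walkToInduce_support G T (P j).1 (hsupp j) hu hv]
      exact List.mem_map_of_mem hwj
    rcases hPdisj i j hij w hi hj with h | h
    · exact Or.inl (Subtype.ext h)
    · exact Or.inr (Subtype.ext h)

theorem stmt6 [Fintype V] (G : SimpleGraph V) (hconn : G.Connected)
    (k ℓ : ℕ) (Vs : Fin ℓ → Set V) (hcov : (⋃ i, Vs i) = Set.univ) :
    ftmvNum G k ≤ ∑ i : Fin ℓ, ftmvNum (G.induce (convexHullSet G (Vs i))) k := by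
  classical
  rw [ftmvNum]
  have hne : {n | ∃ X : Set V, IsFtmvSet G k X ∧ X.ncard = n}.Nonempty :=
    ⟨0, ∅, fun u hu => absurd hu (Set.notMem_empty u), by simp⟩
  apply csSup_le hne
  rintro n ⟨X, hX, rfl⟩
  set H := fun i => convexHullSet G (Vs i) with hH
  have key : ∀ i, (X ∩ H i).ncard ≤ ftmvNum (G.induce (H i)) k := by
    intro i
    have hftmv := isFtmv_induce G (H i) (isConvex_convexHullSet G (Vs i)) k X hX
    have hbdd : BddAbove {n | ∃ Y : Set (H i), IsFtmvSet (G.induce (H i)) k Y ∧ Y.ncard = n} := by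
      refine ⟨Nat.card (H i), ?_⟩
      rintro m ⟨Y, _, rfl⟩
      rw [← Set.ncard_univ]
      exact Set.ncard_le_ncard (Set.subset_univ Y) Set.finite_univ
    have hmem : (X ∩ H i).ncard ∈
        {n | ∃ Y : Set (H i), IsFtmvSet (G.induce (H i)) k Y ∧ Y.ncard = n} := by
      refine ⟨{x : H i | (x : V) ∈ X}, hftmv, ?_⟩
      have : Subtype.val '' {x : H i | (x : V) ∈ X} = X ∩ H i := by
        ext w; simp [Set.mem_image, And.comm]
      rw [← this, Set.ncard_image_of_injective _ Subtype.val_injective]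
    exact le_csSup hbdd hmem
  have hsub : X ⊆ ⋃ i, X ∩ H i := by
    intro x hx
    have : x ∈ ⋃ i, Vs i := hcov ▸ Set.mem_univ x
    obtain ⟨i, hi⟩ := Set.mem_iUnion.1 this
    exact Set.mem_iUnion.2 ⟨i, hx, subset_convexHullSet G (Vs i) hi⟩
  calc X.ncard ≤ (⋃ i, X ∩ H i).ncard :=
        Set.ncard_le_ncard hsub (Set.toFinite _)
    _ ≤ ∑ i, (X ∩ H i).ncard := by
        rw [Set.ncard_eq_toFinset_card']
        calc (⋃ i, X ∩ H i).toFinset.card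
            ≤ (Finset.univ.biUnion fun i => (X ∩ H i).toFinset).card := by
              apply Finset.card_le_card
              intro x hx
              simp only [Set.mem_toFinset, Set.mem_iUnion] at hx
              obtain ⟨i, hi⟩ := hx
              exact Finset.mem_biUnion.2 ⟨i, Finset.mem_univ i, Set.mem_toFinset.2 hi⟩
          _ ≤ ∑ i, ((X ∩ H i).toFinset).card := Finset.card_biUnion_le
          _ = ∑ i, (X ∩ H i).ncard := by
              simp [Set.ncard_eq_toFinset_card']
    _ ≤ ∑ i, ftmvNum (G.induce (H i)) k := Finset.sum_le_sum fun i _ => key i
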